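/- For every D ≥ 0 there exists D' ≥ 0, depending only on D, such that for every proper geodesic metric space X, every D-contracting geodesic in X is D'-super-contracting. -/

import Mathlib

/-! Geodesics, quasi-geodesics, projections, contracting and super-contracting
geodesics, and Morse geodesics in a metric space. -/

open Metric Set

section Defs

variable {X : Type*} [MetricSpace X]

/-- `γ` is a geodesic parametrized by `[a,b]`:
`dist (γ s) (γ t) = |s - t|` for all `s, t ∈ [a,b]`. -/
def IsGeodesicOn (γ : ℝ → X) (a b : ℝ) : Prop :=
  ∀ s ∈ Icc a b, ∀ t ∈ Icc a b, dist (γ s) (γ t) = |s - t|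

/-- `X` is a geodesic metric space: every two points are joined by a geodesic. -/
def GeodesicSpace (X : Type*) [MetricSpace X] : Prop :=
  ∀ x y : X, ∃ γ : ℝ → X, IsGeodesicOn γ 0 (dist x y) ∧ γ 0 = x ∧ γ (dist x y) = y

/-- `σ` is a `(lam, eps)`-quasi-geodesic parametrized by `[a,b]`. -/
def IsQuasiGeodesicOn (σ : ℝ → X) (a b lam eps : ℝ) : Prop :=
  ∀ s ∈ Icc a b, ∀ t ∈ Icc a b,
    (1 / lam) * |s - t| - eps ≤ dist (σ s) (σ t) ∧
      dist (σ s) (σ t) ≤ lam * |s - t| + eps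

/-- The projection `π_C(x)`: points of `C` realizing `infDist x C`. -/
def projPt (C : Set X) (x : X) : Set X :=
  {p ∈ C | dist x p = infDist x C}

/-- The map `γ` (with parameter interval `[a,b]`) is `D`-contracting: for any
closed ball `B` disjoint from the image of `γ`, the projection `π_{im γ}(B)`
has diameter at most `D`. -/
def ContractingOn (γ : ℝ → X) (a b D : ℝ) : Prop :=
  ∀ (z : X) (r : ℝ), Disjoint (closedBall z r) (γ '' Icc a b) →
    ∀ x ∈ closedBall z r, ∀ y ∈ closedBall z r,
      ∀ p ∈ projPt (γ '' Icc a b) x, ∀ q ∈ projPt (γ '' Icc a b) y,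
        dist p q ≤ D

/-- `γ` (with parameter interval `[a,b]`) is `D`-super-contracting: every
subsegment of `γ` is `D`-contracting. -/
def SuperContractingOn (γ : ℝ → X) (a b D : ℝ) : Prop :=
  ∀ s t : ℝ, a ≤ s → s ≤ t → t ≤ b → ContractingOn γ s t D

/-- `γ` (with parameter interval `[a,b]`) is `N`-Morse: every
`(lam, eps)`-quasi-geodesic with endpoints on the image of `γ` stays within
distance `N lam eps` of the image of `γ`. -/
def MorseOn (γ : ℝ → X) (a b : ℝ) (N : ℝ → ℝ → ℝ) : Prop :=
  ∀ lam eps : ℝ, 1 ≤ lam → 0 ≤ eps →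
    ∀ (σ : ℝ → X) (c d : ℝ), c ≤ d → IsQuasiGeodesicOn σ c d lam eps →
      σ c ∈ γ '' Icc a b → σ d ∈ γ '' Icc a b →
        ∀ s ∈ Icc c d, infDist (σ s) (γ '' Icc a b) ≤ N lam eps

end Defs



section Aux

variable {X : Type} [MetricSpace X]

/-- Discrete intermediate value: first time a sequence with jumps ≤ E drops below c. -/
lemma disc_ivt (f : ℕ → ℝ) (n : ℕ) (c E : ℝ)
    (hjump : ∀ i, i < n → |f (i+1) - f i| ≤ E)
    (h0 : c ≤ f 0) (hn : f n < c) :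
    ∃ j, j ≤ n ∧ c - E ≤ f j ∧ f j < c := by
  classical
  have hex : ∃ j, f j < c := ⟨n, hn⟩
  have hjc : f (Nat.find hex) < c := Nat.find_spec hex
  have hjn : Nat.find hex ≤ n := Nat.find_min' hex hn
  refine ⟨Nat.find hex, hjn, ?_, hjc⟩
  rcases Nat.eq_zero_or_pos (Nat.find hex) with h0' | hpos
  · rw [h0'] at hjc; linarith
  · obtain ⟨k, hk⟩ : ∃ k, Nat.find hex = k + 1 :=
      ⟨Nat.find hex - 1, (Nat.succ_pred_eq_of_pos hpos).symm⟩
    have hknot : ¬ f k < c := Nat.find_min hex (by omega)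
    have hkn : k < n := by omega
    have h1 := (abs_le.mp (hjump k hkn)).1
    push_neg at hknot
    rw [hk]
    linarith

lemma geodesic_continuousOn {γ : ℝ → X} {a b : ℝ} (hgeo : IsGeodesicOn γ a b) :
    ContinuousOn γ (Icc a b) := by
  rw [Metric.continuousOn_iff]
  intro u hu ε hε
  exact ⟨ε, hε, fun v hv hvu => by
    rw [hgeo v hv u hu]
    rwa [Real.dist_eq] at hvu⟩

/-- The projection of a single point has diameter at most D. -/
lemma proj_point_diam {γ : ℝ → X} {a b D : ℝ} (hD : 0 ≤ D)
    (hcon : ContractingOn γ a b D) (v P Q : X)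
    (hP : P ∈ projPt (γ '' Icc a b) v) (hQ : Q ∈ projPt (γ '' Icc a b) v) :
    dist P Q ≤ D := by
  by_cases hv : v ∈ γ '' Icc a b
  · have h0 : infDist v (γ '' Icc a b) = 0 := infDist_zero_of_mem hv
    have hPv : P = v := by
      have : dist v P = 0 := by rw [hP.2, h0]
      rwa [dist_comm, dist_eq_zero] at this
    have hQv : Q = v := by
      have : dist v Q = 0 := by rw [hQ.2, h0]
      rwa [dist_comm, dist_eq_zero] at this
    rw [hPv, hQv, dist_self]; exact hD
  · exact hcon v 0
      (by rw [Metric.closedBall_zero]; exact Set.disjoint_singleton_left.mpr hv)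
      v (mem_closedBall_self le_rfl) v (mem_closedBall_self le_rfl) P hP Q hQ

/-- Jump control: projections of points at distance ≤ (D+1)/4 are (D+1)-close. -/
lemma proj_jump {γ : ℝ → X} {a b D : ℝ} (hD : 0 ≤ D)
    (hcon : ContractingOn γ a b D) (u v P Q : X)
    (hP : P ∈ projPt (γ '' Icc a b) u) (hQ : Q ∈ projPt (γ '' Icc a b) v)
    (huv : dist u v ≤ (D+1)/4) :
    dist P Q ≤ D + 1 := by
  by_cases hc : infDist u (γ '' Icc a b) ≤ dist u v
  · have h1 : dist u P = infDist u (γ '' Icc a b) := hP.2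
    have h2 : dist v Q = infDist v (γ '' Icc a b) := hQ.2
    have h3 : infDist v (γ '' Icc a b) ≤ infDist u (γ '' Icc a b) + dist v u :=
      infDist_le_infDist_add_dist
    have h4 : dist P Q ≤ dist P u + dist u v + dist v Q := dist_triangle4 P u v Q
    have h5 : dist P u = dist u P := dist_comm _ _
    have h6 : dist v u = dist u v := dist_comm _ _
    linarith
  · push_neg at hc
    have hdisj : Disjoint (closedBall u (dist u v)) (γ '' Icc a b) := by
      rw [Set.disjoint_left]
      intro w hw hwA
      have h5 := infDist_le_dist_of_mem (x := u) hwA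
      have h6 : dist u w ≤ dist u v := by rw [dist_comm]; exact Metric.mem_closedBall.mp hw
      linarith
    have := hcon u (dist u v) hdisj u (mem_closedBall_self dist_nonneg) v
      (by rw [Metric.mem_closedBall, dist_comm]) P hP Q hQ
    linarith

end Aux

section Walk

variable {X : Type} [MetricSpace X]

/-- Walking along a geodesic, the chosen projection parameter, which starts ≥ c and
ends < c, passes through the window [c - (D+1), c). -/
lemma walk_pos {γ : ℝ → X} {a b D : ℝ} (hD : 0 ≤ D)
    (hgeo : IsGeodesicOn γ a b) (hcon : ContractingOn γ a b D)
    (Φ : X → ℝ) (hΦmem : ∀ v, Φ v ∈ Icc a b)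
    (hΦproj : ∀ v, γ (Φ v) ∈ projPt (γ '' Icc a b) v)
    {g : ℝ → X} {L : ℝ} (hL : 0 ≤ L) (hg : IsGeodesicOn g 0 L)
    {c : ℝ} (h0 : c ≤ Φ (g 0)) (hend : Φ (g L) < c) :
    ∃ τ, τ ∈ Icc (0:ℝ) L ∧ c - (D+1) ≤ Φ (g τ) ∧ Φ (g τ) < c := by
  have hE4 : (0:ℝ) < (D+1)/4 := by linarith
  obtain ⟨n, hn⟩ := exists_nat_gt (L / ((D+1)/4))
  have hn0 : 0 < n := by
    have h1 : (0:ℝ) ≤ L / ((D+1)/4) := div_nonneg hL hE4.le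
    have : (0:ℝ) < (n:ℝ) := lt_of_le_of_lt h1 hn
    exact_mod_cast this
  have hnR : (0:ℝ) < (n:ℝ) := by exact_mod_cast hn0
  set ε := L / n with hε
  have hε0 : 0 ≤ ε := div_nonneg hL hnR.le
  have hεE : ε ≤ (D+1)/4 := by
    rw [hε, div_le_iff₀ hnR]
    have := (div_lt_iff₀ hE4).mp hn
    linarith
  have hnL : (n:ℝ) * ε = L := by
    rw [hε, mul_comm]
    exact div_mul_cancel₀ L (ne_of_gt hnR)
  have hmem : ∀ i : ℕ, i ≤ n → (i:ℝ) * ε ∈ Icc (0:ℝ) L := by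
    intro i hi
    constructor
    · positivity
    · calc (i:ℝ) * ε ≤ (n:ℝ) * ε := by
            apply mul_le_mul_of_nonneg_right _ hε0
            exact_mod_cast hi
        _ = L := hnL
  have hjump : ∀ i, i < n →
      |(fun i : ℕ => Φ (g ((i:ℝ) * ε))) (i+1) - (fun i : ℕ => Φ (g ((i:ℝ) * ε))) i| ≤ D + 1 := by
    intro i hi
    simp only
    have h1 : ((i:ℝ)) * ε ∈ Icc (0:ℝ) L := hmem i hi.le
    have h2 : (((i+1:ℕ)):ℝ) * ε ∈ Icc (0:ℝ) L := hmem (i+1) hi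
    have hdist : dist (g (((i+1:ℕ):ℝ) * ε)) (g ((i:ℝ) * ε)) ≤ (D+1)/4 := by
      rw [hg _ h2 _ h1]
      have h3 : (((i+1:ℕ)):ℝ) * ε - (i:ℝ) * ε = ε := by push_cast; ring
      rw [h3, abs_of_nonneg hε0]
      exact hεE
    have h4 := proj_jump hD hcon (g (((i+1:ℕ):ℝ) * ε)) (g ((i:ℝ) * ε)) _ _
      (hΦproj _) (hΦproj _) hdist
    have h5 : dist (γ (Φ (g (((i+1:ℕ):ℝ) * ε)))) (γ (Φ (g ((i:ℝ) * ε)))) =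
        |Φ (g (((i+1:ℕ):ℝ) * ε)) - Φ (g ((i:ℝ) * ε))| :=
      hgeo _ (hΦmem _) _ (hΦmem _)
    rw [h5] at h4
    push_cast at h4 ⊢
    exact h4
  have hf0 : c ≤ (fun i : ℕ => Φ (g ((i:ℝ) * ε))) 0 := by simpa using h0
  have hfn : (fun i : ℕ => Φ (g ((i:ℝ) * ε))) n < c := by
    simp only [hnL]
    exact hend
  obtain ⟨j, hjn, hw1, hw2⟩ := disc_ivt (fun i : ℕ => Φ (g ((i:ℝ) * ε))) n c (D+1) hjump hf0 hfn
  exact ⟨(j:ℝ) * ε, hmem j hjn, hw1, hw2⟩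

/-- Mirror version: starts ≤ c, ends > c, passes through window (c, c + (D+1)]. -/
lemma walk_neg {γ : ℝ → X} {a b D : ℝ} (hD : 0 ≤ D)
    (hgeo : IsGeodesicOn γ a b) (hcon : ContractingOn γ a b D)
    (Φ : X → ℝ) (hΦmem : ∀ v, Φ v ∈ Icc a b)
    (hΦproj : ∀ v, γ (Φ v) ∈ projPt (γ '' Icc a b) v)
    {g : ℝ → X} {L : ℝ} (hL : 0 ≤ L) (hg : IsGeodesicOn g 0 L)
    {c : ℝ} (h0 : Φ (g 0) ≤ c) (hend : c < Φ (g L)) :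
    ∃ τ, τ ∈ Icc (0:ℝ) L ∧ c < Φ (g τ) ∧ Φ (g τ) ≤ c + (D+1) := by
  have hE4 : (0:ℝ) < (D+1)/4 := by linarith
  obtain ⟨n, hn⟩ := exists_nat_gt (L / ((D+1)/4))
  have hn0 : 0 < n := by
    have h1 : (0:ℝ) ≤ L / ((D+1)/4) := div_nonneg hL hE4.le
    have : (0:ℝ) < (n:ℝ) := lt_of_le_of_lt h1 hn
    exact_mod_cast this
  have hnR : (0:ℝ) < (n:ℝ) := by exact_mod_cast hn0
  set ε := L / n with hε
  have hε0 : 0 ≤ ε := div_nonneg hL hnR.le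
  have hεE : ε ≤ (D+1)/4 := by
    rw [hε, div_le_iff₀ hnR]
    have := (div_lt_iff₀ hE4).mp hn
    linarith
  have hnL : (n:ℝ) * ε = L := by
    rw [hε, mul_comm]
    exact div_mul_cancel₀ L (ne_of_gt hnR)
  have hmem : ∀ i : ℕ, i ≤ n → (i:ℝ) * ε ∈ Icc (0:ℝ) L := by
    intro i hi
    constructor
    · positivity
    · calc (i:ℝ) * ε ≤ (n:ℝ) * ε := by
            apply mul_le_mul_of_nonneg_right _ hε0
            exact_mod_cast hi
        _ = L := hnL
  have hjump : ∀ i, i < n →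
      |(fun i : ℕ => -Φ (g ((i:ℝ) * ε))) (i+1) - (fun i : ℕ => -Φ (g ((i:ℝ) * ε))) i| ≤ D + 1 := by
    intro i hi
    simp only
    have h1 : ((i:ℝ)) * ε ∈ Icc (0:ℝ) L := hmem i hi.le
    have h2 : (((i+1:ℕ)):ℝ) * ε ∈ Icc (0:ℝ) L := hmem (i+1) hi
    have hdist : dist (g (((i+1:ℕ):ℝ) * ε)) (g ((i:ℝ) * ε)) ≤ (D+1)/4 := by
      rw [hg _ h2 _ h1]
      have h3 : (((i+1:ℕ)):ℝ) * ε - (i:ℝ) * ε = ε := by push_cast; ring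
      rw [h3, abs_of_nonneg hε0]
      exact hεE
    have h4 := proj_jump hD hcon (g (((i+1:ℕ):ℝ) * ε)) (g ((i:ℝ) * ε)) _ _
      (hΦproj _) (hΦproj _) hdist
    have h5 : dist (γ (Φ (g (((i+1:ℕ):ℝ) * ε)))) (γ (Φ (g ((i:ℝ) * ε)))) =
        |Φ (g (((i+1:ℕ):ℝ) * ε)) - Φ (g ((i:ℝ) * ε))| :=
      hgeo _ (hΦmem _) _ (hΦmem _)
    rw [h5] at h4
    have h6 : |(-Φ (g (((i+1:ℕ):ℝ) * ε))) - (-Φ (g ((i:ℝ) * ε)))| =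
        |Φ (g (((i+1:ℕ):ℝ) * ε)) - Φ (g ((i:ℝ) * ε))| := by
      rw [← abs_neg]; ring_nf
    push_cast at h4 h6 ⊢
    rw [h6]
    exact h4
  have hf0 : -c ≤ (fun i : ℕ => -Φ (g ((i:ℝ) * ε))) 0 := by simpa using h0
  have hfn : (fun i : ℕ => -Φ (g ((i:ℝ) * ε))) n < -c := by
    simp only [hnL, neg_lt_neg_iff]
    exact hend
  obtain ⟨j, hjn, hw1, hw2⟩ := disc_ivt (fun i : ℕ => -Φ (g ((i:ℝ) * ε))) n (-c) (D+1) hjump hf0 hfn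
  refine ⟨(j:ℝ) * ε, hmem j hjn, ?_, ?_⟩
  · linarith [show -Φ (g ((j:ℝ) * ε)) < -c from hw2]
  · linarith [show -c - (D+1) ≤ -Φ (g ((j:ℝ) * ε)) from hw1]

end Walk

section Compare

variable {X : Type} [MetricSpace X]

/-- Lemma 1: the projection of `x` to the subsegment is 3(D+1)-close to the clamp of
the chosen projection of `x` to the full segment. -/
lemma proj_compare (hGS : GeodesicSpace X)
    {γ : ℝ → X} {a b s t D : ℝ} (hD : 0 ≤ D)
    (hgeo : IsGeodesicOn γ a b) (hcon : ContractingOn γ a b D)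
    (has : a ≤ s) (hst : s ≤ t) (htb : t ≤ b) (hts : 2*(D+1) < t - s)
    (Φ : X → ℝ) (hΦmem : ∀ v, Φ v ∈ Icc a b)
    (hΦproj : ∀ v, γ (Φ v) ∈ projPt (γ '' Icc a b) v)
    (x p : X) (up : ℝ) (hup : up ∈ Icc s t) (hγp : γ up = p)
    (hp : p ∈ projPt (γ '' Icc s t) x)
    (hpos : 0 < infDist x (γ '' Icc s t)) :
    |up - max s (min t (Φ x))| ≤ 3*(D+1) := by
  have hsub : Icc s t ⊆ Icc a b := Icc_subset_Icc has htb
  have hBsubA : γ '' Icc s t ⊆ γ '' Icc a b := image_mono hsub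
  have hBne : (γ '' Icc s t).Nonempty := ⟨p, hp.1⟩
  have hgen : ∀ v : X, Φ v ∈ Icc s t →
      infDist v (γ '' Icc a b) = infDist v (γ '' Icc s t) := by
    intro v hv
    refine le_antisymm (infDist_le_infDist_of_subset hBsubA hBne) ?_
    have h2 : infDist v (γ '' Icc s t) ≤ dist v (γ (Φ v)) :=
      infDist_le_dist_of_mem (mem_image_of_mem _ hv)
    rw [(hΦproj v).2] at h2
    exact h2
  have hΦp : Φ p = up := by
    have h1 : p ∈ γ '' Icc a b := hBsubA hp.1
    have h3 : dist p (γ (Φ p)) = 0 := by rw [(hΦproj p).2, infDist_zero_of_mem h1]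
    have h4 : γ (Φ p) = p := by rwa [dist_comm, dist_eq_zero] at h3
    have h5 : dist (γ (Φ p)) (γ up) = |Φ p - up| := hgeo _ (hΦmem p) _ (hsub hup)
    rw [h4, hγp, dist_self] at h5
    have h6 : Φ p - up = 0 := by rwa [eq_comm, abs_eq_zero] at h5
    linarith
  rcases le_or_gt (Φ x) t with hxt | hxt
  · rcases le_or_gt s (Φ x) with hsx | hsx
    · -- middle case
      have hclamp : max s (min t (Φ x)) = Φ x := by rw [min_eq_right hxt, max_eq_right hsx]
      rw [hclamp]
      have hge := hgen x ⟨hsx, hxt⟩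
      have hpA : p ∈ projPt (γ '' Icc a b) x :=
        ⟨hBsubA hp.1, by rw [hge]; exact hp.2⟩
      have hd := proj_point_diam hD hcon x p (γ (Φ x)) hpA (hΦproj x)
      have heq : dist p (γ (Φ x)) = |up - Φ x| := by
        rw [← hγp]; exact hgeo _ (hsub hup) _ (hΦmem x)
      rw [heq] at hd
      linarith
    · -- left case : Φ x < s
      have hclamp : max s (min t (Φ x)) = s := by
        rw [min_eq_right (by linarith : Φ x ≤ t), max_eq_left (le_of_lt hsx)]
      rw [hclamp]
      refine abs_le.mpr ⟨by linarith [hup.1], ?_⟩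
      by_cases hup3 : up ≤ s + 3*(D+1)
      · linarith
      · exfalso; push_neg at hup3
        obtain ⟨g, hg, hg0, hgL⟩ := hGS x p
        set L := dist x p with hLdef
        have hL0 : 0 ≤ L := dist_nonneg
        have h0' : Φ (g 0) ≤ s + (D+1) := by rw [hg0]; linarith
        have hend : s + (D+1) < Φ (g L) := by rw [hgL, hΦp]; linarith
        obtain ⟨τ, hτ, hw1, hw2⟩ := walk_neg hD hgeo hcon Φ hΦmem hΦproj hL0 hg h0' hend
        have hΦv : Φ (g τ) ∈ Icc s t := ⟨by linarith, by linarith⟩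
        have hge := hgen (g τ) hΦv
        have hdxv : dist x (g τ) = τ := by
          rw [← hg0, hg _ ⟨le_rfl, hL0⟩ _ hτ, zero_sub, abs_neg, abs_of_nonneg hτ.1]
        have hdvp : dist (g τ) p = L - τ := by
          rw [← hgL, hg _ hτ _ ⟨hL0, le_rfl⟩, abs_of_nonpos (by linarith [hτ.2]), neg_sub]
        have hiv : infDist (g τ) (γ '' Icc s t) = L - τ := by
          apply le_antisymm
          · rw [← hdvp]; exact infDist_le_dist_of_mem hp.1
          · have h6 : infDist x (γ '' Icc s t) ≤ infDist (g τ) (γ '' Icc s t) + dist x (g τ) :=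
              infDist_le_infDist_add_dist
            rw [hdxv] at h6
            have h7 : infDist x (γ '' Icc s t) = L := hp.2.symm
            linarith
        have hpv : p ∈ projPt (γ '' Icc a b) (g τ) :=
          ⟨hBsubA hp.1, by rw [hge, hiv]; exact hdvp⟩
        have hd := proj_point_diam hD hcon (g τ) p (γ (Φ (g τ))) hpv (hΦproj (g τ))
        have heq : dist p (γ (Φ (g τ))) = |up - Φ (g τ)| := by
          rw [← hγp]; exact hgeo _ (hsub hup) _ (hΦmem _)
        rw [heq] at hd
        linarith [(abs_le.mp hd).2]
  · -- right case : t < Φ x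
    have hclamp : max s (min t (Φ x)) = t := by rw [min_eq_left hxt.le, max_eq_right hst]
    rw [hclamp]
    refine abs_le.mpr ⟨?_, by linarith [hup.2]⟩
    by_cases hup3 : t - 3*(D+1) ≤ up
    · linarith
    · exfalso; push_neg at hup3
      obtain ⟨g, hg, hg0, hgL⟩ := hGS x p
      set L := dist x p with hLdef
      have hL0 : 0 ≤ L := dist_nonneg
      have h0' : t - (D+1) ≤ Φ (g 0) := by rw [hg0]; linarith
      have hend : Φ (g L) < t - (D+1) := by rw [hgL, hΦp]; linarith
      obtain ⟨τ, hτ, hw1, hw2⟩ := walk_pos hD hgeo hcon Φ hΦmem hΦproj hL0 hg h0' hend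
      have hΦv : Φ (g τ) ∈ Icc s t := ⟨by linarith, by linarith⟩
      have hge := hgen (g τ) hΦv
      have hdxv : dist x (g τ) = τ := by
        rw [← hg0, hg _ ⟨le_rfl, hL0⟩ _ hτ, zero_sub, abs_neg, abs_of_nonneg hτ.1]
      have hdvp : dist (g τ) p = L - τ := by
        rw [← hgL, hg _ hτ _ ⟨hL0, le_rfl⟩, abs_of_nonpos (by linarith [hτ.2]), neg_sub]
      have hiv : infDist (g τ) (γ '' Icc s t) = L - τ := by
        apply le_antisymm
        · rw [← hdvp]; exact infDist_le_dist_of_mem hp.1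
        · have h6 : infDist x (γ '' Icc s t) ≤ infDist (g τ) (γ '' Icc s t) + dist x (g τ) :=
            infDist_le_infDist_add_dist
          rw [hdxv] at h6
          have h7 : infDist x (γ '' Icc s t) = L := hp.2.symm
          linarith
      have hpv : p ∈ projPt (γ '' Icc a b) (g τ) :=
        ⟨hBsubA hp.1, by rw [hge, hiv]; exact hdvp⟩
      have hd := proj_point_diam hD hcon (g τ) p (γ (Φ (g τ))) hpv (hΦproj (g τ))
      have heq : dist p (γ (Φ (g τ))) = |up - Φ (g τ)| := by
        rw [← hγp]; exact hgeo _ (hsub hup) _ (hΦmem _)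
      rw [heq] at hd
      linarith [(abs_le.mp hd).1]

end Compare

lemma clamp_lip (s t u v : ℝ) : |max s (min t u) - max s (min t v)| ≤ |u - v| := by
  have hmin : ∀ p q : ℝ, min t p ≤ min t q + |p - q| := by
    intro p q
    rcases le_total t q with h | h
    · calc min t p ≤ t := min_le_left _ _
        _ = min t q := (min_eq_left h).symm
        _ ≤ min t q + |p - q| := le_add_of_nonneg_right (abs_nonneg _)
    · calc min t p ≤ p := min_le_right _ _
        _ ≤ q + |p - q| := by linarith [le_abs_self (p - q)]
        _ = min t q + |p - q| := by rw [min_eq_right h]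
  have key : ∀ p q : ℝ, max s (min t p) ≤ max s (min t q) + |p - q| := by
    intro p q
    apply max_le
    · calc s ≤ max s (min t q) := le_max_left _ _
        _ ≤ max s (min t q) + |p - q| := le_add_of_nonneg_right (abs_nonneg _)
    · calc min t p ≤ min t q + |p - q| := hmin p q
        _ ≤ max s (min t q) + |p - q| := by linarith [le_max_right s (min t q)]
  refine abs_sub_le_iff.mpr ⟨?_, ?_⟩
  · linarith [key u v]
  · have h1 := key v u
    have h2 : |v - u| = |u - v| := abs_sub_comm v u
    linarith

section Key

variable {X : Type} [MetricSpace X]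

lemma key_contracting (hGS : GeodesicSpace X)
    {γ : ℝ → X} {a b D : ℝ} (hD : 0 ≤ D)
    (hgeo : IsGeodesicOn γ a b) (hcon : ContractingOn γ a b D)
    {s t : ℝ} (has : a ≤ s) (hst : s ≤ t) (htb : t ≤ b) :
    ContractingOn γ s t (7*D + 7) := by
  intro z r hdisj x hx y hy p hp q hq
  have hsub : Icc s t ⊆ Icc a b := Icc_subset_Icc has htb
  have hBsubA : γ '' Icc s t ⊆ γ '' Icc a b := image_mono hsub
  have hBne : (γ '' Icc s t).Nonempty := ⟨γ s, mem_image_of_mem _ (left_mem_Icc.mpr hst)⟩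
  have hcontOn : ContinuousOn γ (Icc a b) := geodesic_continuousOn hgeo
  have hBcpt : IsCompact (γ '' Icc s t) := isCompact_Icc.image_of_continuousOn (hcontOn.mono hsub)
  have hAne : (γ '' Icc a b).Nonempty := hBne.mono hBsubA
  have hAcpt : IsCompact (γ '' Icc a b) := isCompact_Icc.image_of_continuousOn hcontOn
  -- parameters of p and q
  obtain ⟨up, hup, hγp⟩ := hp.1
  obtain ⟨uq, huq, hγq⟩ := hq.1
  have hdpq : dist p q = |up - uq| := by
    rw [← hγp, ← hγq, hgeo _ (hsub hup) _ (hsub huq)]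
  -- trivial case
  by_cases hts : t - s ≤ 2*(D+1)
  · rw [hdpq]
    refine abs_le.mpr ⟨?_, ?_⟩ <;> · have := hup.1; have := hup.2; have := huq.1; have := huq.2; linarith
  push_neg at hts
  -- choice of projections to the big segment
  have hprojA : ∀ v : X, ∃ u, u ∈ Icc a b ∧ γ u ∈ projPt (γ '' Icc a b) v := by
    intro v
    obtain ⟨w, hw, hwd⟩ := hAcpt.exists_infDist_eq_dist hAne v
    obtain ⟨u, hu, rfl⟩ := hw
    exact ⟨u, hu, mem_image_of_mem _ hu, hwd.symm⟩
  choose Φ hΦmem hΦproj using hprojA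
  -- the ball is strictly farther than r from the subsegment
  obtain ⟨w₀, hw₀, hWd⟩ := hBcpt.exists_infDist_eq_dist hBne z
  have hWr : r < infDist z (γ '' Icc s t) := by
    by_contra hcontra
    push_neg at hcontra
    have hmem0 : w₀ ∈ closedBall z r := by
      rw [Metric.mem_closedBall, dist_comm]
      rw [hWd] at hcontra
      exact hcontra
    exact (Set.disjoint_left.mp hdisj hmem0) hw₀
  -- genuineness
  have hgen : ∀ v : X, Φ v ∈ Icc s t →
      infDist v (γ '' Icc a b) = infDist v (γ '' Icc s t) := by
    intro v hv
    refine le_antisymm (infDist_le_infDist_of_subset hBsubA hBne) ?_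
    have h2 : infDist v (γ '' Icc s t) ≤ dist v (γ (Φ v)) :=
      infDist_le_dist_of_mem (mem_image_of_mem _ hv)
    rw [(hΦproj v).2] at h2
    exact h2
  -- ball points are far from the subsegment
  have hposB : ∀ x' : X, x' ∈ closedBall z r → 0 < infDist x' (γ '' Icc s t) := by
    intro x' hx'
    have h1 : infDist z (γ '' Icc s t) ≤ infDist x' (γ '' Icc s t) + dist z x' :=
      infDist_le_infDist_add_dist
    have h2 : dist z x' ≤ r := by rw [dist_comm]; exact Metric.mem_closedBall.mp hx'
    linarith
  have hL1 : ∀ (x' p' : X) (u' : ℝ), u' ∈ Icc s t → γ u' = p' →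
      p' ∈ projPt (γ '' Icc s t) x' → x' ∈ closedBall z r →
      |u' - max s (min t (Φ x'))| ≤ 3*(D+1) := fun x' p' u' h1 h2 h3 h4 =>
    proj_compare hGS hD hgeo hcon has hst htb hts Φ hΦmem hΦproj x' p' u' h1 h2 h3 (hposB x' h4)
  rcases lt_or_ge (t - (D+1)) (Φ z) with hR | hR'
  · -- RIGHT case : everything projects near t
    have claim : ∀ x' : X, x' ∈ closedBall z r → t - 3*(D+1) ≤ Φ x' := by
      intro x' hx'
      rcases lt_or_ge (Φ x') (t - (D+1)) with hc | hc
      · obtain ⟨g, hg, hg0, hgL⟩ := hGS z x'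
        set L := dist z x' with hLdef
        have hL0 : 0 ≤ L := dist_nonneg
        have h0' : t - (D+1) ≤ Φ (g 0) := by rw [hg0]; linarith
        have hend : Φ (g L) < t - (D+1) := by rw [hgL]; exact hc
        obtain ⟨τ, hτ, hw1, hw2⟩ := walk_pos hD hgeo hcon Φ hΦmem hΦproj hL0 hg h0' hend
        have hΦv : Φ (g τ) ∈ Icc s t := ⟨by linarith, by linarith⟩
        have hge := hgen (g τ) hΦv
        have hdzv : dist z (g τ) = τ := by
          rw [← hg0, hg _ ⟨le_rfl, hL0⟩ _ hτ, zero_sub, abs_neg, abs_of_nonneg hτ.1]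
        have hdvx : dist (g τ) x' = L - τ := by
          rw [← hgL, hg _ hτ _ ⟨hL0, le_rfl⟩, abs_of_nonpos (by linarith [hτ.2]), neg_sub]
        have hWv : infDist z (γ '' Icc s t) ≤ infDist (g τ) (γ '' Icc s t) + τ := by
          have h6 : infDist z (γ '' Icc s t) ≤ infDist (g τ) (γ '' Icc s t) + dist z (g τ) :=
            infDist_le_infDist_add_dist
          rwa [hdzv] at h6
        have hrL : L ≤ r := by rw [hLdef, dist_comm]; exact Metric.mem_closedBall.mp hx'
        set ρ := (L - τ) + (infDist z (γ '' Icc s t) - r)/2 with hρdef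
        have hρ0 : 0 ≤ ρ := by rw [hρdef]; have := hτ.2; linarith
        have hρv : ρ < infDist (g τ) (γ '' Icc a b) := by
          rw [hge, hρdef]; linarith
        have hdisjv : Disjoint (closedBall (g τ) ρ) (γ '' Icc a b) := by
          rw [Set.disjoint_left]
          intro w hw hwA
          have h5 := infDist_le_dist_of_mem (x := g τ) hwA
          have h6 : dist (g τ) w ≤ ρ := by rw [dist_comm]; exact Metric.mem_closedBall.mp hw
          linarith
        have hDv := hcon (g τ) ρ hdisjv (g τ) (mem_closedBall_self hρ0) x'
          (by rw [Metric.mem_closedBall, dist_comm, hdvx, hρdef]; linarith)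
          _ (hΦproj (g τ)) _ (hΦproj x')
        have heq : dist (γ (Φ (g τ))) (γ (Φ x')) = |Φ (g τ) - Φ x'| :=
          hgeo _ (hΦmem _) _ (hΦmem _)
        rw [heq] at hDv
        have := (abs_le.mp hDv).2
        linarith
      · linarith
    have hxup : t - 6*(D+1) ≤ up ∧ up ≤ t := by
      have hc := claim x hx
      have h1 := hL1 x p up hup hγp hp hx
      have hc1 : t - 3*(D+1) ≤ max s (min t (Φ x)) :=
        le_trans (le_min (by linarith) hc) (le_max_right _ _)
      have := (abs_le.mp h1).1
      have := (abs_le.mp h1).2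
      exact ⟨by linarith, hup.2⟩
    have hyuq : t - 6*(D+1) ≤ uq ∧ uq ≤ t := by
      have hc := claim y hy
      have h1 := hL1 y q uq huq hγq hq hy
      have hc1 : t - 3*(D+1) ≤ max s (min t (Φ y)) :=
        le_trans (le_min (by linarith) hc) (le_max_right _ _)
      have := (abs_le.mp h1).1
      have := (abs_le.mp h1).2
      exact ⟨by linarith, huq.2⟩
    rw [hdpq]
    refine abs_le.mpr ⟨?_, ?_⟩ <;>
      · have := hxup.1; have := hxup.2; have := hyuq.1; have := hyuq.2; linarith
  · rcases lt_or_ge (Φ z) (s + (D+1)) with hL | hM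
    · -- LEFT case : everything projects near s
      have claim : ∀ x' : X, x' ∈ closedBall z r → Φ x' ≤ s + 3*(D+1) := by
        intro x' hx'
        rcases lt_or_ge (s + (D+1)) (Φ x') with hc | hc
        · obtain ⟨g, hg, hg0, hgL⟩ := hGS z x'
          set L := dist z x' with hLdef
          have hL0 : 0 ≤ L := dist_nonneg
          have h0' : Φ (g 0) ≤ s + (D+1) := by rw [hg0]; linarith
          have hend : s + (D+1) < Φ (g L) := by rw [hgL]; exact hc
          obtain ⟨τ, hτ, hw1, hw2⟩ := walk_neg hD hgeo hcon Φ hΦmem hΦproj hL0 hg h0' hend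
          have hΦv : Φ (g τ) ∈ Icc s t := ⟨by linarith, by linarith⟩
          have hge := hgen (g τ) hΦv
          have hdzv : dist z (g τ) = τ := by
            rw [← hg0, hg _ ⟨le_rfl, hL0⟩ _ hτ, zero_sub, abs_neg, abs_of_nonneg hτ.1]
          have hdvx : dist (g τ) x' = L - τ := by
            rw [← hgL, hg _ hτ _ ⟨hL0, le_rfl⟩, abs_of_nonpos (by linarith [hτ.2]), neg_sub]
          have hWv : infDist z (γ '' Icc s t) ≤ infDist (g τ) (γ '' Icc s t) + τ := by
            have h6 : infDist z (γ '' Icc s t) ≤ infDist (g τ) (γ '' Icc s t) + dist z (g τ) :=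
              infDist_le_infDist_add_dist
            rwa [hdzv] at h6
          have hrL : L ≤ r := by rw [hLdef, dist_comm]; exact Metric.mem_closedBall.mp hx'
          set ρ := (L - τ) + (infDist z (γ '' Icc s t) - r)/2 with hρdef
          have hρ0 : 0 ≤ ρ := by rw [hρdef]; have := hτ.2; linarith
          have hρv : ρ < infDist (g τ) (γ '' Icc a b) := by
            rw [hge, hρdef]; linarith
          have hdisjv : Disjoint (closedBall (g τ) ρ) (γ '' Icc a b) := by
            rw [Set.disjoint_left]
            intro w hw hwA
            have h5 := infDist_le_dist_of_mem (x := g τ) hwA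
            have h6 : dist (g τ) w ≤ ρ := by rw [dist_comm]; exact Metric.mem_closedBall.mp hw
            linarith
          have hDv := hcon (g τ) ρ hdisjv (g τ) (mem_closedBall_self hρ0) x'
            (by rw [Metric.mem_closedBall, dist_comm, hdvx, hρdef]; linarith)
            _ (hΦproj (g τ)) _ (hΦproj x')
          have heq : dist (γ (Φ (g τ))) (γ (Φ x')) = |Φ (g τ) - Φ x'| :=
            hgeo _ (hΦmem _) _ (hΦmem _)
          rw [heq] at hDv
          have := (abs_le.mp hDv).1
          linarith
        · linarith
      have hxup : s ≤ up ∧ up ≤ s + 6*(D+1) := by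
        have hc := claim x hx
        have h1 := hL1 x p up hup hγp hp hx
        have hc1 : max s (min t (Φ x)) ≤ s + 3*(D+1) :=
          max_le (by linarith) ((min_le_right _ _).trans hc)
        have := (abs_le.mp h1).1
        have := (abs_le.mp h1).2
        exact ⟨hup.1, by linarith⟩
      have hyuq : s ≤ uq ∧ uq ≤ s + 6*(D+1) := by
        have hc := claim y hy
        have h1 := hL1 y q uq huq hγq hq hy
        have hc1 : max s (min t (Φ y)) ≤ s + 3*(D+1) :=
          max_le (by linarith) ((min_le_right _ _).trans hc)
        have := (abs_le.mp h1).1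
        have := (abs_le.mp h1).2
        exact ⟨huq.1, by linarith⟩
      rw [hdpq]
      refine abs_le.mpr ⟨?_, ?_⟩ <;>
        · have := hxup.1; have := hxup.2; have := hyuq.1; have := hyuq.2; linarith
    · -- MIDDLE case : z projects genuinely inside [s,t]
      have hzmem : Φ z ∈ Icc s t := ⟨by linarith, by linarith⟩
      have hinfz : infDist z (γ '' Icc a b) = infDist z (γ '' Icc s t) := hgen z hzmem
      set ρ := r + (infDist z (γ '' Icc s t) - r)/2 with hρdef
      have hρ1 : r ≤ ρ := by rw [hρdef]; linarith
      have hρ2 : ρ < infDist z (γ '' Icc a b) := by rw [hinfz, hρdef]; linarith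
      have hdisj2 : Disjoint (closedBall z ρ) (γ '' Icc a b) := by
        rw [Set.disjoint_left]
        intro w hw hwA
        have h5 := infDist_le_dist_of_mem (x := z) hwA
        have h6 : dist z w ≤ ρ := by rw [dist_comm]; exact Metric.mem_closedBall.mp hw
        linarith
      have hxx : x ∈ closedBall z ρ := by
        rw [Metric.mem_closedBall] at hx ⊢; linarith
      have hyy : y ∈ closedBall z ρ := by
        rw [Metric.mem_closedBall] at hy ⊢; linarith
      have hDxy := hcon z ρ hdisj2 x hxx y hyy _ (hΦproj x) _ (hΦproj y)
      have heq : dist (γ (Φ x)) (γ (Φ y)) = |Φ x - Φ y| := hgeo _ (hΦmem _) _ (hΦmem _)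
      rw [heq] at hDxy
      have h1 := hL1 x p up hup hγp hp hx
      have h2 := hL1 y q uq huq hγq hq hy
      have h3 := clamp_lip s t (Φ x) (Φ y)
      have h4 : |max s (min t (Φ x)) - max s (min t (Φ y))| ≤ D := h3.trans hDxy
      rw [hdpq]
      have a1 := (abs_le.mp h1).1
      have a2 := (abs_le.mp h1).2
      have b1 := (abs_le.mp h2).1
      have b2 := (abs_le.mp h2).2
      have c1 := (abs_le.mp h4).1
      have c2 := (abs_le.mp h4).2
      refine abs_le.mpr ⟨by linarith, by linarith⟩

end Key

/-- for every `D ≥ 0` there is a `D' ≥ 0` depending only on `D`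
such that in any proper geodesic metric space, every `D`-contracting geodesic
is `D'`-super-contracting. -/
theorem contracting_implies_super_contracting :
    ∀ D : ℝ, 0 ≤ D → ∃ D' : ℝ, 0 ≤ D' ∧
      ∀ (X : Type) [MetricSpace X] [ProperSpace X], GeodesicSpace X →
        ∀ (γ : ℝ → X) (a b : ℝ), a ≤ b → IsGeodesicOn γ a b →
          ContractingOn γ a b D → SuperContractingOn γ a b D' := by
  intro D hD
  refine ⟨7*D + 7, by linarith, ?_⟩
  intro X _ _ hGS γ a b _hab hgeo hcon s t has hst htb
  exact key_contracting hGS hD hgeo hcon has hst htb
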